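/- Let X be a set of feasible routing solutions and let (d_full, f_full) ∈ X satisfy: d_full ≤ d for all (d,f) ∈ X, and f ≤ f_full for all (d,f) ∈ X with d = d_full (i.e., f_full is the scheduled-line cost of the freight forwarder's solution under the fully subsidized, untaxed policy (1,0)). If the budget B satisfies B > f_full, then the tax-and-subsidy setting problem is infeasible: there is no tuple (s,t,d,f) with 0 ≤ s ≤ 1, t ≥ 0, (d,f) ∈ X lower-level optimal for (s,t), and s·f − t·d = B. -/
import Mathlib


/-- Proposition 4, infeasible case: Let `(d_full, f_full) ∈ X` satisfy
`d_full ≤ d` for all `(d,f) ∈ X` and `f ≤ f_full` for all `(d,f) ∈ X` with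
`d = d_full` (i.e., `f_full` is the scheduled-line cost under the fully
subsidized, untaxed policy `(1,0)`). If `B > f_full`, then there is no tuple
`(s,t,d,f)` with `0 ≤ s ≤ 1`, `t ≥ 0`, `(d,f) ∈ X` lower-level optimal for
`(s,t)`, and `s·f − t·d = B`. -/
theorem stmt9 (X : Set (ℝ × ℝ)) (hX : X.Nonempty)
    (hXnn : ∀ p ∈ X, 0 ≤ p.1 ∧ 0 ≤ p.2)
    (dfull ffull : ℝ)
    (hmem : (dfull, ffull) ∈ X)
    (hmin : ∀ p ∈ X, dfull ≤ p.1)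
    (hmax : ∀ p ∈ X, p.1 = dfull → p.2 ≤ ffull)
    (B : ℝ) (hB : ffull < B) :
    ¬ ∃ s t d f : ℝ, 0 ≤ s ∧ s ≤ 1 ∧ 0 ≤ t ∧
      (d, f) ∈ X ∧
      (∀ p ∈ X,
        (1 + t) * d + (1 - s) * f ≤ (1 + t) * p.1 + (1 - s) * p.2) ∧
      s * f - t * d = B := by
  rintro ⟨s, t, d, f, hs0, hs1, ht0, hdf, hopt, hbud⟩
  have hopt' := hopt (dfull, ffull) hmem
  simp only at hopt'
  have hd : dfull ≤ d := hmin (d, f) hdf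
  have hd0 : 0 ≤ d := (hXnn (d, f) hdf).1
  have hf0 : 0 ≤ f := (hXnn (d, f) hdf).2
  have hffull : f ≤ ffull := by
    have key : 0 ≤ (1 + t) * (d - dfull) :=
      mul_nonneg (by linarith) (by linarith)
    rcases lt_or_eq_of_le hs1 with hlt | heq
    · -- s < 1
      nlinarith
    · -- s = 1
      have hdeq : d = dfull := by
        by_contra hne
        have hlt' : dfull < d := lt_of_le_of_ne hd (Ne.symm hne)
        rw [heq] at hopt'
        nlinarith [mul_pos (show (0:ℝ) < 1 + t by linarith)
          (show (0:ℝ) < d - dfull by linarith)]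
      exact hmax (d, f) hdf hdeq
  nlinarith [mul_nonneg ht0 hd0, mul_nonneg hs0 hf0]
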